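/- Let (a, b) be a solution of the reduced resonant system i∂ₜa = R(b,b,a), i∂ₜb = R(a,a,b). Then for every σ ∈ ℝ the quantity ‖a(t)‖²_{h^σ} + ‖b(t)‖²_{h^σ} is constant in time. -/

import Mathlib

open scoped ComplexConjugate

/-- The reduced resonant nonlinearity over `Γ₀ = {(p,q,r,s) : {p,r} = {q,s}}`. -/
noncomputable def Rop (f g h : ℤ → ℂ) (p : ℤ) : ℂ :=
  ∑' x : {x : ℤ × ℤ × ℤ // ({p, x.2.1} : Set ℤ) = {x.1, x.2.2}},
    f x.val.1 * conj (g x.val.2.1) * h x.val.2.2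

lemma pair_eq_iff (p q r s : ℤ) :
    ({p, r} : Set ℤ) = {q, s} ↔ (q = p ∧ s = r) ∨ (q = r ∧ s = p) := by
  constructor
  · intro h
    have h1 : q = p ∨ q = r := by
      have : q ∈ ({p, r} : Set ℤ) := by rw [h]; exact Set.mem_insert _ _
      simpa using this
    have h2 : s = p ∨ s = r := by
      have : s ∈ ({p, r} : Set ℤ) := by
        rw [h]; exact Set.mem_insert_of_mem _ rfl
      simpa using this
    have h3 : p = q ∨ p = s := by
      have : p ∈ ({q, s} : Set ℤ) := by rw [← h]; exact Set.mem_insert _ _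
      simpa using this
    have h4 : r = q ∨ r = s := by
      have : r ∈ ({q, s} : Set ℤ) := by
        rw [← h]; exact Set.mem_insert_of_mem _ rfl
      simpa using this
    omega
  · rintro (⟨hq, hs⟩ | ⟨hq, hs⟩) <;> subst hq <;> subst hs
    · rfl
    · exact Set.pair_comm _ _

lemma l2_mul_summable (U V : ℤ → ℂ)
    (hU : Summable fun n => ‖U n‖ ^ 2) (hV : Summable fun n => ‖V n‖ ^ 2) :
    Summable fun n => ‖U n‖ * ‖V n‖ := by
  refine Summable.of_nonneg_of_le (fun n => by positivity) (fun n => ?_)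
    ((hU.add hV).mul_left (1 / 2))
  have h := sq_nonneg (‖U n‖ - ‖V n‖)
  nlinarith [norm_nonneg (U n), norm_nonneg (V n)]

lemma key_summable (p : ℤ) (U V : ℤ → ℂ)
    (hU : Summable fun n => ‖U n‖ ^ 2) (hV : Summable fun n => ‖V n‖ ^ 2) :
    Summable (fun x : {x : ℤ × ℤ × ℤ // ({p, x.2.1} : Set ℤ) = {x.1, x.2.2}} =>
      ‖U x.val.1 * conj (U x.val.2.1) * V x.val.2.2‖) := by
  set g : ℤ × ℤ × ℤ → ℝ := fun x => ‖U x.1 * conj (U x.2.1) * V x.2.2‖ with hg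
  set S : Set (ℤ × ℤ × ℤ) := {x | ({p, x.2.1} : Set ℤ) = {x.1, x.2.2}} with hSdef
  have hgnn : ∀ x, 0 ≤ g x := fun x => norm_nonneg _
  set S1 : Set (ℤ × ℤ × ℤ) := Set.range (fun r : ℤ => ((p, r, r) : ℤ × ℤ × ℤ)) with hS1
  set S2 : Set (ℤ × ℤ × ℤ) := Set.range (fun q : ℤ => ((q, q, p) : ℤ × ℤ × ℤ)) with hS2
  have hsub : S ⊆ S1 ∪ S2 := by
    rintro ⟨q, r, s⟩ hx
    rcases (pair_eq_iff p q r s).1 hx with ⟨hq, hs⟩ | ⟨hq, hs⟩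
    · exact Or.inl ⟨r, by simp [hq, hs]⟩
    · exact Or.inr ⟨q, by simp [hq, hs]⟩
  have hinj1 : Function.Injective (fun r : ℤ => ((p, r, r) : ℤ × ℤ × ℤ)) := by
    intro r r' h
    simpa using congrArg (fun x : ℤ × ℤ × ℤ => x.2.1) h
  have hinj2 : Function.Injective (fun q : ℤ => ((q, q, p) : ℤ × ℤ × ℤ)) := by
    intro q q' h
    simpa using congrArg (fun x : ℤ × ℤ × ℤ => x.1) h
  have h1 : Summable (S1.indicator g) := by
    refine (hinj1.summable_iff ?_).mp ?_
    · intro x hx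
      exact Set.indicator_of_notMem hx g
    · have : (S1.indicator g) ∘ (fun r : ℤ => ((p, r, r) : ℤ × ℤ × ℤ)) =
          fun r => ‖U p‖ * (‖U r‖ * ‖V r‖) := by
        funext r
        have hmem : ((p, r, r) : ℤ × ℤ × ℤ) ∈ S1 := ⟨r, rfl⟩
        simp only [Function.comp_apply, Set.indicator_of_mem hmem, hg]
        simp [norm_mul, mul_assoc]
      rw [this]
      exact (l2_mul_summable U V hU hV).mul_left _
  have h2 : Summable (S2.indicator g) := by
    refine (hinj2.summable_iff ?_).mp ?_
    · intro x hx
      exact Set.indicator_of_notMem hx g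
    · have : (S2.indicator g) ∘ (fun q : ℤ => ((q, q, p) : ℤ × ℤ × ℤ)) =
          fun q => ‖V p‖ * ‖U q‖ ^ 2 := by
        funext q
        have hmem : ((q, q, p) : ℤ × ℤ × ℤ) ∈ S2 := ⟨q, rfl⟩
        simp only [Function.comp_apply, Set.indicator_of_mem hmem, hg]
        simp [norm_mul, sq]
        ring
      rw [this]
      exact hU.mul_left _
  have hind : Summable (S.indicator g) := by
    refine Summable.of_nonneg_of_le
      (fun x => Set.indicator_nonneg (fun y _ => hgnn y) x) (fun x => ?_) (h1.add h2)
    by_cases hx : x ∈ S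
    · rw [Set.indicator_of_mem hx]
      rcases hsub hx with hx1 | hx2
      · rw [Set.indicator_of_mem hx1]
        exact le_add_of_nonneg_right (Set.indicator_nonneg (fun y _ => hgnn y) x)
      · rw [Set.indicator_of_mem hx2]
        exact le_add_of_nonneg_left (Set.indicator_nonneg (fun y _ => hgnn y) x)
    · rw [Set.indicator_of_notMem hx]
      exact add_nonneg (Set.indicator_nonneg (fun y _ => hgnn y) x)
        (Set.indicator_nonneg (fun y _ => hgnn y) x)
  exact summable_subtype_iff_indicator.mpr hind

lemma term_real (A B : ℤ → ℂ) (p q r s : ℤ) (h : ({p, r} : Set ℤ) = {q, s}) :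
    conj (conj (A p) * (B q * conj (B r) * A s) + conj (B p) * (A q * conj (A r) * B s))
      = conj (A p) * (B q * conj (B r) * A s) + conj (B p) * (A q * conj (A r) * B s) := by
  rcases (pair_eq_iff p q r s).1 h with ⟨hq, hs⟩ | ⟨hq, hs⟩ <;> subst hq <;> subst hs <;>
    · simp only [map_add, map_mul, Complex.conj_conj]
      ring

lemma real_key (A B : ℤ → ℂ) (p : ℤ)
    (hA : Summable fun n => ‖A n‖ ^ 2) (hB : Summable fun n => ‖B n‖ ^ 2) :
    (conj (A p) * Rop B B A p + conj (B p) * Rop A A B p).im = 0 := by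
  have hsX : Summable (fun x : {x : ℤ × ℤ × ℤ // ({p, x.2.1} : Set ℤ) = {x.1, x.2.2}} =>
      conj (A p) * (B x.val.1 * conj (B x.val.2.1) * A x.val.2.2)) := by
    apply Summable.of_norm
    refine ((key_summable p B A hB hA).mul_left ‖conj (A p)‖).congr fun x => ?_
    exact (norm_mul _ _).symm
  have hsY : Summable (fun x : {x : ℤ × ℤ × ℤ // ({p, x.2.1} : Set ℤ) = {x.1, x.2.2}} =>
      conj (B p) * (A x.val.1 * conj (A x.val.2.1) * B x.val.2.2)) := by
    apply Summable.of_norm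
    refine ((key_summable p A B hA hB).mul_left ‖conj (B p)‖).congr fun x => ?_
    exact (norm_mul _ _).symm
  have hX : conj (A p) * Rop B B A p
      = ∑' x : {x : ℤ × ℤ × ℤ // ({p, x.2.1} : Set ℤ) = {x.1, x.2.2}},
          conj (A p) * (B x.val.1 * conj (B x.val.2.1) * A x.val.2.2) := by
    simp only [Rop]
    exact tsum_mul_left.symm
  have hY : conj (B p) * Rop A A B p
      = ∑' x : {x : ℤ × ℤ × ℤ // ({p, x.2.1} : Set ℤ) = {x.1, x.2.2}},
          conj (B p) * (A x.val.1 * conj (A x.val.2.1) * B x.val.2.2) := by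
    simp only [Rop]
    exact tsum_mul_left.symm
  have hZ : conj (A p) * Rop B B A p + conj (B p) * Rop A A B p
      = ∑' x : {x : ℤ × ℤ × ℤ // ({p, x.2.1} : Set ℤ) = {x.1, x.2.2}},
          (conj (A p) * (B x.val.1 * conj (B x.val.2.1) * A x.val.2.2)
            + conj (B p) * (A x.val.1 * conj (A x.val.2.1) * B x.val.2.2)) := by
    rw [hX, hY]
    exact (Summable.tsum_add hsX hsY).symm
  rw [hZ]
  rw [← Complex.conj_eq_iff_im]
  calc conj (∑' x : {x : ℤ × ℤ × ℤ // ({p, x.2.1} : Set ℤ) = {x.1, x.2.2}},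
          (conj (A p) * (B x.val.1 * conj (B x.val.2.1) * A x.val.2.2)
            + conj (B p) * (A x.val.1 * conj (A x.val.2.1) * B x.val.2.2)))
      = ∑' x : {x : ℤ × ℤ × ℤ // ({p, x.2.1} : Set ℤ) = {x.1, x.2.2}},
          conj (conj (A p) * (B x.val.1 * conj (B x.val.2.1) * A x.val.2.2)
            + conj (B p) * (A x.val.1 * conj (A x.val.2.1) * B x.val.2.2)) := by
        exact tsum_star
    _ = _ := tsum_congr fun x =>
        term_real A B p x.val.1 x.val.2.1 x.val.2.2 x.prop

lemma hasDerivAt_norm_sq {c : ℝ → ℂ} {d : ℂ} {t : ℝ} (hc : HasDerivAt c d t) :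
    HasDerivAt (fun s => ‖c s‖ ^ 2) (2 * (conj (c t) * d).re) t := by
  have hconj : HasDerivAt (fun s => conj (c s)) (conj d) t := by
    have := (Complex.conjCLE.toContinuousLinearMap.hasFDerivAt
      (x := c t)).comp_hasDerivAt t hc
    exact this
  have hmul := hconj.mul hc
  have hre := (Complex.reCLM.hasFDerivAt
    (x := conj (c t) * c t)).comp_hasDerivAt t hmul
  have hfun : (Complex.reCLM ∘ fun s => conj (c s) * c s) = fun s => ‖c s‖ ^ 2 := by
    funext s
    show (conj (c s) * c s).re = ‖c s‖ ^ 2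
    rw [Complex.sq_norm, Complex.normSq_apply, Complex.mul_re,
      Complex.conj_re, Complex.conj_im]
    ring
  have hval : Complex.reCLM (conj d * c t + conj (c t) * d) = 2 * (conj (c t) * d).re := by
    show (conj d * c t + conj (c t) * d).re = 2 * (conj (c t) * d).re
    simp only [Complex.add_re, Complex.mul_re, Complex.conj_re, Complex.conj_im]
    ring
  rw [show (Complex.reCLM ∘ ((fun s => conj (c s)) * c)) = (Complex.reCLM ∘ fun s => conj (c s) * c s) from rfl, hfun, hval] at hre
  exact hre

/-- Along a solution of the reduced resonant system `i∂ₜa = R(b,b,a)`,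
`i∂ₜb = R(a,a,b)`, for every `σ ∈ ℝ` the quantity `‖a(t)‖²_{h^σ} + ‖b(t)‖²_{h^σ}`
is constant in time. -/
theorem stmt_8 (a b : ℝ → ℤ → ℂ)
    (hsum : ∀ σ : ℝ, ∀ t : ℝ, Summable (fun p : ℤ =>
      (1 + (p : ℝ) ^ 2) ^ σ * (‖a t p‖ ^ 2 + ‖b t p‖ ^ 2)))
    (ha : ∀ t : ℝ, ∀ p : ℤ,
      HasDerivAt (fun s => a s p) (-Complex.I * Rop (b t) (b t) (a t) p) t)
    (hb : ∀ t : ℝ, ∀ p : ℤ,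
      HasDerivAt (fun s => b s p) (-Complex.I * Rop (a t) (a t) (b t) p) t) :
    ∀ σ : ℝ, ∀ t₁ t₂ : ℝ,
      ((∑' p : ℤ, (1 + (p : ℝ) ^ 2) ^ σ * ‖a t₁ p‖ ^ 2) +
        ∑' p : ℤ, (1 + (p : ℝ) ^ 2) ^ σ * ‖b t₁ p‖ ^ 2) =
      ((∑' p : ℤ, (1 + (p : ℝ) ^ 2) ^ σ * ‖a t₂ p‖ ^ 2) +
        ∑' p : ℤ, (1 + (p : ℝ) ^ 2) ^ σ * ‖b t₂ p‖ ^ 2) := by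
  have l2 : ∀ t : ℝ, Summable (fun n => ‖a t n‖ ^ 2) ∧ Summable (fun n => ‖b t n‖ ^ 2) := by
    intro t
    have h0 := hsum 0 t
    simp only [Real.rpow_zero, one_mul] at h0
    constructor
    · exact Summable.of_nonneg_of_le (fun n => sq_nonneg _)
        (fun n => le_add_of_nonneg_right (sq_nonneg _)) h0
    · exact Summable.of_nonneg_of_le (fun n => sq_nonneg _)
        (fun n => le_add_of_nonneg_left (sq_nonneg _)) h0
  have hconstN : ∀ (p : ℤ) (t₁ t₂ : ℝ),
      ‖a t₁ p‖ ^ 2 + ‖b t₁ p‖ ^ 2 = ‖a t₂ p‖ ^ 2 + ‖b t₂ p‖ ^ 2 := by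
    intro p
    have hderiv : ∀ t : ℝ, HasDerivAt (fun s => ‖a s p‖ ^ 2 + ‖b s p‖ ^ 2) 0 t := by
      intro t
      have h1 := hasDerivAt_norm_sq (ha t p)
      have h2 := hasDerivAt_norm_sq (hb t p)
      have hadd := h1.add h2
      have him := real_key (a t) (b t) p (l2 t).1 (l2 t).2
      have e1 : ∀ z w : ℂ, (z * (-Complex.I * w)).re = (z * w).im := by
        intro z w
        simp [Complex.mul_re, Complex.mul_im]
        ring
      have hzero : 2 * (conj (a t p) * (-Complex.I * Rop (b t) (b t) (a t) p)).re
          + 2 * (conj (b t p) * (-Complex.I * Rop (a t) (a t) (b t) p)).re = 0 := by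
        rw [e1, e1]
        have : (conj (a t p) * Rop (b t) (b t) (a t) p).im
            + (conj (b t p) * Rop (a t) (a t) (b t) p).im = 0 := by
          simpa [Complex.add_im] using him
        linarith
      rw [hzero] at hadd
      exact hadd
    intro t₁ t₂
    exact is_const_of_deriv_eq_zero
      (fun x => (hderiv x).differentiableAt) (fun x => (hderiv x).deriv) t₁ t₂
  intro σ t₁ t₂
  have wnn : ∀ p : ℤ, (0 : ℝ) ≤ (1 + (p : ℝ) ^ 2) ^ σ := by
    intro p
    exact Real.rpow_nonneg (by positivity) σ
  have split : ∀ t : ℝ, Summable (fun p : ℤ => (1 + (p : ℝ) ^ 2) ^ σ * ‖a t p‖ ^ 2)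
      ∧ Summable (fun p : ℤ => (1 + (p : ℝ) ^ 2) ^ σ * ‖b t p‖ ^ 2) := by
    intro t
    constructor
    · refine Summable.of_nonneg_of_le (fun p => by positivity) (fun p => ?_) (hsum σ t)
      exact mul_le_mul_of_nonneg_left (le_add_of_nonneg_right (sq_nonneg _)) (wnn p)
    · refine Summable.of_nonneg_of_le (fun p => by positivity) (fun p => ?_) (hsum σ t)
      exact mul_le_mul_of_nonneg_left (le_add_of_nonneg_left (sq_nonneg _)) (wnn p)
  calc (∑' p : ℤ, (1 + (p : ℝ) ^ 2) ^ σ * ‖a t₁ p‖ ^ 2) +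
        ∑' p : ℤ, (1 + (p : ℝ) ^ 2) ^ σ * ‖b t₁ p‖ ^ 2
      = ∑' p : ℤ, ((1 + (p : ℝ) ^ 2) ^ σ * ‖a t₁ p‖ ^ 2
          + (1 + (p : ℝ) ^ 2) ^ σ * ‖b t₁ p‖ ^ 2) :=
        (Summable.tsum_add (split t₁).1 (split t₁).2).symm
    _ = ∑' p : ℤ, ((1 + (p : ℝ) ^ 2) ^ σ * ‖a t₂ p‖ ^ 2
          + (1 + (p : ℝ) ^ 2) ^ σ * ‖b t₂ p‖ ^ 2) := by
        refine tsum_congr fun p => ?_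
        rw [← mul_add, ← mul_add, hconstN p t₁ t₂]
    _ = _ := Summable.tsum_add (split t₂).1 (split t₂).2
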